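/- Let n ≥ 3, ȳ ∈ ℝⁿ, and S̄ positive semidefinite with Null(S̄) = span{𝟙, h} for some h orthogonal to 𝟙 having at least three distinct coordinates. Set C = Diag(ȳ) − S̄. Then 𝟙𝟙ᵀ is the unique optimal solution of max{Tr(CX) : diag(X) = 𝟙, X ⪰ 0}, (ȳ, S̄) is the unique optimal dual solution, and strict complementarity fails for this SDP. -/

import Mathlib

open Matrix

lemma aux_diag_entry {n : ℕ} (S B : Matrix (Fin n) (Fin n) ℝ) (i : Fin n) :
    (B * S * Bᴴ) i i = (fun j => B i j) ⬝ᵥ S *ᵥ (fun j => B i j) := by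
  rw [dotProduct_mulVec]
  simp [mul_apply, vecMul, dotProduct, conjTranspose_apply]

lemma aux_trace_eq {n : ℕ} (S B : Matrix (Fin n) (Fin n) ℝ) :
    (S * (Bᴴ * B)).trace = ∑ i, (fun j => B i j) ⬝ᵥ S *ᵥ (fun j => B i j) := by
  rw [trace_mul_comm, mul_assoc, trace_mul_comm]
  exact Finset.sum_congr rfl fun i _ => aux_diag_entry S B i

open scoped MatrixOrder in
lemma aux_psd_factor {n : ℕ} {X : Matrix (Fin n) (Fin n) ℝ} (hX : X.PosSemidef) :
    ∃ B : Matrix (Fin n) (Fin n) ℝ, X = Bᴴ * B := by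
  obtain ⟨B, hB⟩ := CStarAlgebra.nonneg_iff_eq_star_mul_self.mp hX.nonneg
  exact ⟨B, hB⟩

lemma aux_trace_nonneg {n : ℕ} {S X : Matrix (Fin n) (Fin n) ℝ}
    (hS : S.PosSemidef) (hX : X.PosSemidef) : 0 ≤ (S * X).trace := by
  obtain ⟨B, rfl⟩ := aux_psd_factor hX
  rw [aux_trace_eq]
  exact Finset.sum_nonneg fun i _ => by simpa using hS.dotProduct_mulVec_nonneg (fun j => B i j)

lemma aux_mul_eq_zero {n : ℕ} {S X : Matrix (Fin n) (Fin n) ℝ}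
    (hS : S.PosSemidef) (hX : X.PosSemidef) (h0 : (S * X).trace = 0) : S * X = 0 := by
  obtain ⟨B, rfl⟩ := aux_psd_factor hX
  rw [aux_trace_eq] at h0
  have hker : ∀ i, S *ᵥ (fun j => B i j) = 0 := by
    intro i
    have hterm := (Finset.sum_eq_zero_iff_of_nonneg
      (fun i _ => by simpa using hS.dotProduct_mulVec_nonneg (fun j => B i j))).mp h0 i (Finset.mem_univ i)
    exact (hS.dotProduct_mulVec_zero_iff (fun j => B i j)).mp (by simpa using hterm)
  rw [← mul_assoc]
  have hSB : S * Bᴴ = 0 := by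
    ext k i
    have := congrFun (hker i) k
    simpa [mul_apply, mulVec, dotProduct, conjTranspose_apply, mul_comm] using this
  rw [hSB, Matrix.zero_mul]

lemma aux_affine {n : ℕ} (h a b : Fin n → ℝ)
    (sym : ∀ i j, a j + b j * h i = a i + b i * h j)
    (dg : ∀ i, a i + b i * h i = 1)
    (i0 j0 k0 : Fin n) (hpq : h i0 ≠ h j0) (hpr : h i0 ≠ h k0) (hqr : h j0 ≠ h k0) :
    ∀ i j, a j + b j * h i = 1 := by
  have hd : h i0 - h j0 ≠ 0 := sub_ne_zero.mpr hpq
  obtain ⟨β, γ, hb⟩ : ∃ β γ : ℝ, ∀ i, b i = β + γ * h i := by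
    refine ⟨(a i0 - a j0)/(h i0 - h j0), (b i0 - b j0)/(h i0 - h j0), fun i => ?_⟩
    field_simp
    linear_combination sym i j0 - sym i i0
  obtain ⟨α, ha⟩ : ∃ α : ℝ, ∀ i, a i = α + β * h i := by
    refine ⟨a i0 - h i0 * β, fun i => ?_⟩
    linear_combination -(sym i i0) + h i * hb i0 - h i0 * hb i
  have quad : ∀ i, α + 2*β*h i + γ * h i^2 = 1 := fun i => by
    linear_combination dg i - ha i - h i * hb i
  have hγ : γ = 0 := by
    have key : γ * ((h i0 - h j0) * (h i0 - h k0) * (h j0 - h k0)) = 0 := by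
      linear_combination (h i0 - h k0) * quad i0 - (h i0 - h k0) * quad j0
        - (h i0 - h j0) * quad i0 + (h i0 - h j0) * quad k0
    rcases mul_eq_zero.mp key with h' | h'
    · exact h'
    · exact absurd h'
        (mul_ne_zero (mul_ne_zero hd (sub_ne_zero.mpr hpr)) (sub_ne_zero.mpr hqr))
  have hβ : β = 0 := by
    have key : β * (2 * (h i0 - h j0)) = 0 := by
      linear_combination quad i0 - quad j0 - (h i0^2 - h j0^2) * hγ
    rcases mul_eq_zero.mp key with h' | h'
    · exact h'
    · exact absurd h' (by positivity)
  intro i j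
  linear_combination ha j + h i * hb j + quad i0
    + (h j + h i - 2*h i0) * hβ + (h j * h i - h i0^2) * hγ

/-- If `C = Diag(ȳ) − S̄` with `S̄ ⪰ 0`, `Null(S̄) = span{𝟙, h}`, `h ⊥ 𝟙` having
at least three distinct coordinates, then `𝟙𝟙ᵀ` is the unique primal optimal
solution of the MaxCut SDP, `ȳ` is the unique dual optimal solution (with slack
`S̄`), and strict complementarity fails. -/
theorem strict_complementarity_failure_high_rank (n : ℕ) (hn : 3 ≤ n)
    (ybar : Fin n → ℝ) (Sbar : Matrix (Fin n) (Fin n) ℝ)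
    (hSbar : Sbar.PosSemidef)
    (h : Fin n → ℝ) (hperp : ∑ i, h i = 0)
    (hdist : ∃ i j k : Fin n, h i ≠ h j ∧ h i ≠ h k ∧ h j ≠ h k)
    (hnull : {v : Fin n → ℝ | Sbar.mulVec v = 0} =
      (Submodule.span ℝ {(fun _ => 1 : Fin n → ℝ), h} : Set (Fin n → ℝ)))
    (C : Matrix (Fin n) (Fin n) ℝ) (hC : C = Matrix.diagonal ybar - Sbar)
    (J : Matrix (Fin n) (Fin n) ℝ)
    (hJ : J = Matrix.vecMulVec (fun _ => (1:ℝ)) (fun _ => (1:ℝ))) :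
    -- 𝟙𝟙ᵀ is the unique primal optimal solution
    ((J.PosSemidef ∧ (∀ i, J i i = 1)) ∧
      (∀ Y : Matrix (Fin n) (Fin n) ℝ, Y.PosSemidef → (∀ i, Y i i = 1) →
        (C * Y).trace ≤ (C * J).trace) ∧
      (∀ X : Matrix (Fin n) (Fin n) ℝ, X.PosSemidef → (∀ i, X i i = 1) →
        (∀ Y, Y.PosSemidef → (∀ i, Y i i = 1) → (C * Y).trace ≤ (C * X).trace) →
          X = J)) ∧
    -- ȳ (with slack S̄) is the unique dual optimal solution
    ((Matrix.diagonal ybar - C = Sbar) ∧ Sbar.PosSemidef ∧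
      (∀ y : Fin n → ℝ, (Matrix.diagonal y - C).PosSemidef →
        (∑ i, ybar i) ≤ (∑ i, y i)) ∧
      (∀ y : Fin n → ℝ, (Matrix.diagonal y - C).PosSemidef →
        (∑ i, y i) ≤ (∑ i, ybar i) → y = ybar)) ∧
    -- strict complementarity fails
    ¬ ∃ (X : Matrix (Fin n) (Fin n) ℝ) (y : Fin n → ℝ),
        (X.PosSemidef ∧ (∀ i, X i i = 1) ∧
          ∀ Y, Y.PosSemidef → (∀ i, Y i i = 1) → (C * Y).trace ≤ (C * X).trace) ∧
        ((Matrix.diagonal y - C).PosSemidef ∧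
          ∀ y', (Matrix.diagonal y' - C).PosSemidef → (∑ i, y i) ≤ (∑ i, y' i)) ∧
        X * (Matrix.diagonal y - C) = 0 ∧
        (X + (Matrix.diagonal y - C)).PosDef := by
  -- basic kernel facts
  have hone : Sbar *ᵥ (fun _ => (1:ℝ)) = 0 := by
    have h1 : (fun _ => (1:ℝ)) ∈
        (Submodule.span ℝ {(fun _ => 1 : Fin n → ℝ), h} : Set (Fin n → ℝ)) :=
      Submodule.subset_span (Set.mem_insert _ _)
    rw [← hnull] at h1; exact h1
  have hhker : Sbar *ᵥ h = 0 := by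
    have h1 : h ∈ (Submodule.span ℝ {(fun _ => 1 : Fin n → ℝ), h} : Set (Fin n → ℝ)) :=
      Submodule.subset_span (Set.mem_insert_of_mem _ rfl)
    rw [← hnull] at h1; exact h1
  have hJdiag : ∀ i, J i i = 1 := by intro i; rw [hJ]; simp [vecMulVec_apply]
  have hJpsd : J.PosSemidef := by
    rw [hJ]
    refine PosSemidef.of_dotProduct_mulVec_nonneg ?_ ?_
    · show _ᴴ = _
      ext i j
      simp [vecMulVec_apply, conjTranspose_apply]
    · intro x
      have hx : star x ⬝ᵥ (vecMulVec (fun _ => (1:ℝ)) (fun _ => (1:ℝ))) *ᵥ x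
          = (∑ j, x j)^2 := by
        simp only [star_trivial, dotProduct, mulVec, vecMulVec_apply, one_mul]
        rw [← Finset.sum_mul]
        ring
      rw [hx]; positivity
  have hSJ : Sbar * J = 0 := by
    rw [hJ]
    ext i j
    have := congrFun hone i
    simpa [mul_apply, mulVec, dotProduct, vecMulVec_apply] using this
  have tdiag : ∀ (y : Fin n → ℝ) (Y : Matrix (Fin n) (Fin n) ℝ), (∀ i, Y i i = 1) →
      (Matrix.diagonal y * Y).trace = ∑ i, y i := by
    intro y Y hY
    rw [Matrix.trace]
    refine Finset.sum_congr rfl fun i _ => ?_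
    simp [Matrix.diag, Matrix.diagonal_mul, hY i]
  have trCY : ∀ Y : Matrix (Fin n) (Fin n) ℝ, (∀ i, Y i i = 1) →
      (C * Y).trace = (∑ i, ybar i) - (Sbar * Y).trace := by
    intro Y hY
    rw [hC, Matrix.sub_mul, trace_sub, tdiag ybar Y hY]
  have trCJ : (C * J).trace = ∑ i, ybar i := by
    rw [trCY J hJdiag, hSJ, trace_zero, sub_zero]
  have popt : ∀ Y : Matrix (Fin n) (Fin n) ℝ, Y.PosSemidef → (∀ i, Y i i = 1) →
      (C * Y).trace ≤ (C * J).trace := by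
    intro Y hYpsd hYdiag
    rw [trCY Y hYdiag, trCJ]
    linarith [aux_trace_nonneg hSbar hYpsd]
  have puniq : ∀ X : Matrix (Fin n) (Fin n) ℝ, X.PosSemidef → (∀ i, X i i = 1) →
      (∀ Y, Y.PosSemidef → (∀ i, Y i i = 1) → (C * Y).trace ≤ (C * X).trace) → X = J := by
    intro X hXpsd hXdiag hXopt
    have h1 : (C * J).trace ≤ (C * X).trace := hXopt J hJpsd hJdiag
    have ht : (Sbar * X).trace = 0 := by
      rw [trCY X hXdiag, trCJ] at h1
      have := aux_trace_nonneg hSbar hXpsd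
      linarith
    have hzero : Sbar * X = 0 := aux_mul_eq_zero hSbar hXpsd ht
    have hcol : ∀ j, ∃ aa bb : ℝ,
        aa • (fun _ => (1:ℝ)) + bb • h = (fun i => X i j) := by
      intro j
      have hm : (fun i => X i j) ∈ {v : Fin n → ℝ | Sbar *ᵥ v = 0} := by
        show Sbar *ᵥ _ = 0
        funext i
        have := congrFun (congrFun hzero i) j
        simpa [mul_apply, mulVec, dotProduct] using this
      rw [hnull] at hm
      exact Submodule.mem_span_pair.mp hm
    choose a b hab using hcol
    have hX' : ∀ i j, X i j = a j + b j * h i := by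
      intro i j
      have := congrFun (hab j) i
      simpa using this.symm
    have sym : ∀ i j, a j + b j * h i = a i + b i * h j := by
      intro i j
      rw [← hX' i j, ← hX' j i]
      have := congrFun (congrFun hXpsd.1 i) j
      simpa [conjTranspose_apply] using this.symm
    have dg : ∀ i, a i + b i * h i = 1 := fun i => by rw [← hX' i i]; exact hXdiag i
    obtain ⟨i0, j0, k0, hpq, hpr, hqr⟩ := hdist
    have key := aux_affine h a b sym dg i0 j0 k0 hpq hpr hqr
    ext i j
    rw [hX' i j, key i j, hJ]
    simp [vecMulVec_apply]
  have dualeq : Matrix.diagonal ybar - C = Sbar := by rw [hC]; exact sub_sub_cancel _ _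
  have dopt : ∀ y : Fin n → ℝ, (Matrix.diagonal y - C).PosSemidef →
      (∑ i, ybar i) ≤ (∑ i, y i) := by
    intro y hy
    have h0 := aux_trace_nonneg hy hJpsd
    rw [Matrix.sub_mul, trace_sub, tdiag y J hJdiag, trCJ] at h0
    linarith
  have duniq : ∀ y : Fin n → ℝ, (Matrix.diagonal y - C).PosSemidef →
      (∑ i, y i) ≤ (∑ i, ybar i) → y = ybar := by
    intro y hy hle
    have hge := dopt y hy
    have ht : ((Matrix.diagonal y - C) * J).trace = 0 := by
      rw [Matrix.sub_mul, trace_sub, tdiag y J hJdiag, trCJ]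
      linarith
    have hz : (Matrix.diagonal y - C) * J = 0 := aux_mul_eq_zero hy hJpsd ht
    funext i
    have hii := congrFun (congrFun hz i) i
    have hrow := congrFun hone i
    rw [hC] at hii
    simp only [hJ, mul_apply, vecMulVec_apply, mul_one, Matrix.sub_apply,
      Matrix.diagonal_apply, mulVec, dotProduct, mul_one, Pi.zero_apply,
      Matrix.zero_apply] at hii hrow
    rw [Finset.sum_sub_distrib, Finset.sum_sub_distrib] at hii
    simp only [Finset.sum_ite_eq, Finset.mem_univ, if_true] at hii
    linarith
  refine ⟨⟨⟨hJpsd, hJdiag⟩, popt, puniq⟩, ⟨dualeq, hSbar, dopt, duniq⟩, ?_⟩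
  rintro ⟨X, y, ⟨hXpsd, hXdiag, hXopt⟩, ⟨hySD, hyopt⟩, hcomp, hPD⟩
  have hXJ : X = J := puniq X hXpsd hXdiag hXopt
  have hyy : y = ybar := duniq y hySD (hyopt ybar (by rw [dualeq]; exact hSbar))
  have hne : h ≠ 0 := by
    obtain ⟨i, j, k, hij, -, -⟩ := hdist
    intro h0
    apply hij
    rw [h0]
    simp
  have hmv : (X + (Matrix.diagonal y - C)) *ᵥ h = 0 := by
    rw [hXJ, hyy, dualeq, Matrix.add_mulVec, hhker, add_zero, hJ]
    funext i
    simp [mulVec, dotProduct, vecMulVec_apply, hperp]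
  have := hPD.dotProduct_mulVec_pos hne
  rw [hmv] at this
  simp at this
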